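/- Let T be a Toeplitz operator on ℓ²(ℕ, ℂ) with symbol coefficients φ_k (k ∈ ℤ), and let C be a conjugation on ℓ²(ℕ, ℂ) corresponding to an orthonormal basis {f_n}_{n∈ℕ} (i.e., C f_n = f_n for all n). Define c_{n,m} := Σ_{k=0}^∞ ⟨f_k, e_n⟩ · ⟨f_k, e_m⟩ for m, n ∈ ℕ (so c_{n,m} = ⟨C e_n, e_m⟩). Then T is C-symmetric (C T* C = T) if and only if for all j, k ∈ ℕ: Σ_{n=0}^∞ conj(φ_{n−k}) · c_{n,j} = Σ_{n=1}^∞ conj(φ_n) · c_{k,n+j} + Σ_{l=0}^{j} conj(φ_{−l}) · c_{k,j−l}, where all infinite series converge. -/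

import Mathlib

noncomputable section
open scoped ComplexConjugate
open ContinuousLinearMap

/-- A conjugation on a complex Hilbert space: an antilinear, involutive, isometric map. -/
def IsConjugation {E : Type*} [NormedAddCommGroup E] [InnerProductSpace ℂ E] (C : E → E) : Prop :=
  (∀ (a : ℂ) (f g : E), C (a • f + g) = conj a • C f + C g) ∧
  (∀ f, C (C f) = f) ∧
  (∀ f, ‖C f‖ = ‖f‖)

/-- The inner product in the paper's convention: linear in the first argument and
conjugate-linear in the second (Mathlib's `inner` with the arguments swapped). -/
def ip {E : Type*} [NormedAddCommGroup E] [InnerProductSpace ℂ E] (x y : E) : ℂ :=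
  inner ℂ y x

/-- `ℓ²(ℕ, ℂ)`, identified with the Hardy space `H²(𝔻)` via Taylor coefficients. -/
abbrev Ell2 : Type := lp (fun _ : ℕ => ℂ) 2

/-- The standard orthonormal basis of `ℓ²(ℕ, ℂ)`. -/
def e (n : ℕ) : Ell2 := lp.single 2 n 1

local notation "⟪" x ", " y "⟫" => @inner ℂ _ _ x y

section ConjAux

variable {E : Type*} [NormedAddCommGroup E] [InnerProductSpace ℂ E] {C : E → E}
  (hC : IsConjugation C)

include hC

lemma Conj.add (x y : E) : C (x + y) = C x + C y := by
  have := hC.1 1 x y; simpa using this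

lemma Conj.zero : C 0 = 0 := by
  have := hC.1 1 (0 : E) 0
  simp only [smul_zero, add_zero, map_one, one_smul] at this
  exact left_eq_add.mp this

lemma Conj.smul (a : ℂ) (x : E) : C (a • x) = conj a • C x := by
  have := hC.1 a x 0
  simpa [Conj.zero hC] using this

lemma Conj.sub (x y : E) : C (x - y) = C x - C y := by
  have := hC.1 (-1) y x
  rw [add_comm] at this
  rw [sub_eq_add_neg, ← neg_one_smul ℂ y, this]
  simp [add_comm, sub_eq_add_neg]

lemma Conj.isometry : Isometry C :=
  Isometry.of_dist_eq fun a b => by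
    rw [dist_eq_norm, dist_eq_norm, ← Conj.sub hC, hC.2.2]

lemma Conj.inner (x y : E) : ⟪C x, C y⟫ = ⟪y, x⟫ := by
  have hI : (RCLike.I : ℂ) = Complex.I := rfl
  have h1 : C x + C y = C (x + y) := (Conj.add hC x y).symm
  have h2 : C x - C y = C (x - y) := (Conj.sub hC x y).symm
  have h3 : C x - Complex.I • C y = C (x + Complex.I • y) := by
    have := hC.1 Complex.I y x
    rw [add_comm] at this
    rw [this]
    simp [Complex.conj_I, sub_eq_add_neg, add_comm]
  have h4 : C x + Complex.I • C y = C (x - Complex.I • y) := by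
    have := hC.1 (-Complex.I) y x
    rw [add_comm] at this
    rw [sub_eq_add_neg, ← neg_smul, this]
    simp [Complex.conj_I, add_comm]
  rw [inner_eq_sum_norm_sq_div_four, inner_eq_sum_norm_sq_div_four, hI]
  rw [h1, h2, h3, h4, hC.2.2, hC.2.2, hC.2.2, hC.2.2]
  have e1 : ‖x + y‖ = ‖y + x‖ := by rw [add_comm]
  have e2 : ‖x - y‖ = ‖y - x‖ := norm_sub_rev x y
  have e3 : ‖x + Complex.I • y‖ = ‖y - Complex.I • x‖ := by
    have : y - Complex.I • x = (-Complex.I) • (x + Complex.I • y) := by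
      rw [smul_add, smul_smul]; simp [neg_smul]; abel
    rw [this, norm_smul]; simp
  have e4 : ‖x - Complex.I • y‖ = ‖y + Complex.I • x‖ := by
    have : y + Complex.I • x = Complex.I • (x - Complex.I • y) := by
      rw [smul_sub, smul_smul]; simp; abel
    rw [this, norm_smul]; simp
  rw [e1, e2, e3, e4]

lemma Conj.inner_right (x y : E) : ⟪y, C x⟫ = ⟪x, C y⟫ := by
  conv_lhs => rw [← hC.2.1 y]
  rw [Conj.inner hC]

end ConjAux

lemma inner_e (j : ℕ) (x : Ell2) : ⟪e j, x⟫ = x j := by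
  rw [e, lp.inner_single_left, RCLike.inner_apply]
  simp

/-- Let `T` be a Toeplitz operator on `ℓ²(ℕ, ℂ)` with symbol coefficients
`φ_k`, and `C` a conjugation corresponding to an orthonormal basis `{f_n}` (`C f_n = f_n`).
With `c_{n,m} := Σ_k ⟨f_k, e_n⟩⟨f_k, e_m⟩ (= ⟨C e_n, e_m⟩)`, the operator `T` is `C`-symmetric
if and only if for all `j, k ∈ ℕ`:
`Σ_{n≥0} conj(φ_{n−k}) c_{n,j} = Σ_{n≥1} conj(φ_n) c_{k,n+j} + Σ_{l=0}^{j} conj(φ_{−l}) c_{k,j−l}`. -/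
theorem c_symmetric_iff_coefficient_equations
    (S₀ T : Ell2 →L[ℂ] Ell2) (hS₀ : ∀ n, S₀ (e n) = e (n + 1))
    (hT : (adjoint S₀).comp (T.comp S₀) = T)
    (φ : ℤ → ℂ) (hφ : ∀ m n : ℕ, φ ((m : ℤ) - (n : ℤ)) = ip (T (e n)) (e m))
    (C : Ell2 → Ell2) (hC : IsConjugation C)
    (f : HilbertBasis ℕ ℂ Ell2) (hf : ∀ n, C (f n) = f n)
    (c : ℕ → ℕ → ℂ)
    (hc : ∀ n m : ℕ, c n m = ∑' k : ℕ, ip (f k) (e n) * ip (f k) (e m)) :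
    (∀ x, C (adjoint T (C x)) = T x) ↔
      ∀ j k : ℕ,
        ∑' n : ℕ, conj (φ ((n : ℤ) - (k : ℤ))) * c n j =
          (∑' n : ℕ, conj (φ ((n : ℤ) + 1)) * c k (n + 1 + j)) +
            ∑ l ∈ Finset.range (j + 1), conj (φ (-(l : ℤ))) * c k (j - l) := by
  classical
  set A := adjoint T with hA
  have hcoord : ∀ (x : Ell2) (j : ℕ), ⟪e j, x⟫ = x j := fun x j => inner_e j x
  have hφ' : ∀ m n : ℕ, φ ((m : ℤ) - (n : ℤ)) = T (e n) m := by
    intro m n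
    rw [hφ m n]
    unfold ip
    exact hcoord _ m
  have hCip : ∀ n m : ℕ, c n m = C (e n) m := by
    intro n m
    have h1 : (⟪e m, C (e n)⟫ : ℂ) = ∑' k, ⟪e m, f k⟫ * ⟪f k, C (e n)⟫ :=
      (f.tsum_inner_mul_inner (e m) (C (e n))).symm
    rw [hc n m, ← hcoord (C (e n)) m, h1]
    apply tsum_congr
    intro k
    rw [show (⟪f k, C (e n)⟫ : ℂ) = ⟪C (f k), C (e n)⟫ by rw [hf k], Conj.inner hC]
    unfold ip
    ring
  have hsym : ∀ n m : ℕ, C (e n) m = C (e m) n := by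
    intro n m
    rw [← hcoord, ← hcoord, Conj.inner_right hC]
  have hL : ∀ j k : ℕ, (∑' n : ℕ, conj (φ ((n : ℤ) - (k : ℤ))) * c n j) = A (C (e j)) k := by
    intro j k
    have h1 : (A (C (e j))) k = ⟪T (e k), C (e j)⟫ := by
      rw [← hcoord (A (C (e j))) k, hA, adjoint_inner_right]
    rw [h1, lp.inner_eq_tsum]
    apply tsum_congr
    intro n
    rw [RCLike.inner_apply, ← hφ' n k, hCip n j, hsym n j, mul_comm]
  have hR : ∀ j k : ℕ, ((∑' n : ℕ, conj (φ ((n : ℤ) + 1)) * c k (n + 1 + j)) +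
      ∑ l ∈ Finset.range (j + 1), conj (φ (-(l : ℤ))) * c k (j - l)) = A (C (e k)) j := by
    intro j k
    set g : ℕ → ℂ := fun p => conj (T (e j) p) * C (e k) p with hg
    have hgsum : Summable g := by
      refine (lp.summable_inner (𝕜 := ℂ) (T (e j)) (C (e k))).congr fun p => ?_
      rw [RCLike.inner_apply, mul_comm]
    have hAj : A (C (e k)) j = ∑' p, g p := by
      rw [← hcoord (A (C (e k))) j, hA, adjoint_inner_right, lp.inner_eq_tsum]
      exact tsum_congr fun p => (RCLike.inner_apply _ _).trans (mul_comm _ _)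
    rw [hAj, ← Summable.sum_add_tsum_nat_add (j + 1) hgsum, add_comm]
    congr 1
    · rw [← Finset.sum_range_reflect g (j + 1)]
      refine Finset.sum_congr rfl fun l hl => ?_
      have hl' : l ≤ j := by
        have := Finset.mem_range.mp hl; omega
      have hidx : j + 1 - 1 - l = j - l := by omega
      have harg : -(l : ℤ) = ((j - l : ℕ) : ℤ) - (j : ℤ) := by
        rw [Nat.cast_sub hl']; ring
      rw [harg, hφ' (j - l) j, hCip k (j - l), hidx]
    · apply tsum_congr
      intro n
      have harg : (n : ℤ) + 1 = ((n + (j + 1) : ℕ) : ℤ) - (j : ℤ) := by push_cast; ring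
      have hidx : n + 1 + j = n + (j + 1) := by omega
      rw [harg, hφ' (n + (j + 1)) j, hCip k (n + 1 + j), hidx]
  constructor
  · intro H j k
    have key : A (C (e j)) = C (T (e j)) := by
      have h2 := congrArg C (H (e j))
      rwa [hC.2.1] at h2
    rw [hL j k, hR j k, key, ← hcoord (C (T (e j))) k, ← hcoord (A (C (e k))) j, hA,
      adjoint_inner_right, Conj.inner_right hC]
  · intro Heq x
    have hE : ∀ j k : ℕ, A (C (e j)) k = A (C (e k)) j := by
      intro j k
      rw [← hL j k, ← hR j k]
      exact Heq j k
    have hbasis : ∀ k, A (C (e k)) = C (T (e k)) := by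
      intro k
      refine lp.ext (funext fun j => ?_)
      calc A (C (e k)) j = A (C (e j)) k := (hE j k).symm
        _ = C (T (e k)) j := by
            rw [← hcoord (A (C (e j))) k, ← hcoord (C (T (e k))) j, hA, adjoint_inner_right,
              Conj.inner_right hC]
    have hFG : A (C x) = C (T x) := by
      have h1 : HasSum (fun n : ℕ => lp.single 2 n (x n)) x :=
        lp.hasSum_single ENNReal.ofNat_ne_top x
      have h1' : HasSum (fun n : ℕ => x n • e n) x := by
        simpa only [e, ← lp.single_smul, smul_eq_mul, mul_one] using h1
      have hCcont : Continuous C := (Conj.isometry hC).continuous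
      let F : Ell2 →+ Ell2 :=
        { toFun := fun y => A (C y)
          map_zero' := by simp [Conj.zero hC]
          map_add' := fun a b => by
            show A (C (a + b)) = A (C a) + A (C b)
            rw [Conj.add hC, map_add] }
      let G : Ell2 →+ Ell2 :=
        { toFun := fun y => C (T y)
          map_zero' := by simp [Conj.zero hC]
          map_add' := fun a b => by
            show C (T (a + b)) = C (T a) + C (T b)
            rw [map_add, Conj.add hC] }
      have hFcont : Continuous F := A.continuous.comp hCcont
      have hGcont : Continuous G := hCcont.comp T.continuous
      have h2 : HasSum (fun n : ℕ => A (C (x n • e n))) (A (C x)) := h1'.map F hFcont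
      have h3 : HasSum (fun n : ℕ => C (T (x n • e n))) (C (T x)) := h1'.map G hGcont
      have heq : (fun n : ℕ => A (C (x n • e n))) = fun n : ℕ => C (T (x n • e n)) := by
        funext n
        rw [Conj.smul hC, map_smul, hbasis n, map_smul, Conj.smul hC]
      rw [heq] at h2
      exact h2.unique h3
    rw [hFG, hC.2.1]
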